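/- Let n ≥ 2 be an integer and let α ∈ (0, n−2) be a real number that is not a positive integer. Then there exists an n×n real symmetric positive semidefinite matrix A = (a_ij) with all entries nonnegative such that the entrywise power A^{∘α} := (a_ij^α) is not positive semidefinite. -/

import Mathlib

open Matrix

/-- Entrywise power with the convention `0 ^ α := 0` for all `α`. -/
noncomputable def powF (α x : ℝ) : ℝ := if x = 0 then 0 else x ^ α

/-- `ψ_α(x) := sgn(x) * |x| ^ α`, with `ψ_α(0) := 0`. -/
noncomputable def psiF (α x : ℝ) : ℝ := if x = 0 then 0 else Real.sign x * |x| ^ α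

/-- `φ_α(x) := |x| ^ α`, with `φ_α(0) := 0`. -/
noncomputable def phiF (α x : ℝ) : ℝ := if x = 0 then 0 else |x| ^ α

open Filter Finset Set Topology

noncomputable def gb (α : ℝ) (k : ℕ) : ℝ := (∏ j ∈ Finset.range k, (α - j)) / k.factorial

lemma gb_zero (α : ℝ) : gb α 0 = 1 := by simp [gb]

lemma gb_succ' (α : ℝ) (k : ℕ) : (k+1 : ℝ) * gb α (k+1) = α * gb (α-1) k := by
  have h1 : ∏ j ∈ Finset.range (k+1), (α - j) = α * ∏ j ∈ Finset.range k, ((α-1) - j) := by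
    rw [Finset.prod_range_succ']
    have : ∀ j ∈ Finset.range k, (α - (↑(j+1):ℝ)) = (α - 1) - j := by
      intro j _; push_cast; ring
    rw [Finset.prod_congr rfl this]
    push_cast; ring
  rw [gb, gb, h1, Nat.factorial_succ]
  push_cast
  field_simp

noncomputable def PP (α : ℝ) (M : ℕ) (u : ℝ) : ℝ := ∑ k ∈ Finset.range M, gb α k * u^k

noncomputable def ff (α : ℝ) (M : ℕ) (u : ℝ) : ℝ := (1+u) ^ α - PP α M u

lemma hasDerivAt_ff (α : ℝ) (M : ℕ) (u : ℝ) (hu : 0 < u) :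
    HasDerivAt (ff α (M+1)) (α * ff (α-1) M u) u := by
  have h1 : HasDerivAt (fun u : ℝ => (1+u) ^ α) (α * (1+u) ^ (α-1)) u := by
    have := (Real.hasDerivAt_rpow_const (x := 1+u) (p := α) (Or.inl (by linarith))).comp u
      ((hasDerivAt_id u).const_add 1)
    simpa [Function.comp_def] using this
  have h2 : HasDerivAt (PP α (M+1)) (α * PP (α-1) M u) u := by
    have h3 : HasDerivAt (PP α (M+1))
        (∑ k ∈ Finset.range (M+1), gb α k * (k * u^(k-1))) u := by
      apply HasDerivAt.fun_sum
      intro k _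
      exact (hasDerivAt_pow k u).const_mul _
    convert h3 using 1
    rw [Finset.sum_range_succ', PP, Finset.mul_sum]
    simp only [Nat.cast_zero, zero_mul, mul_zero, add_zero, Nat.add_sub_cancel]
    apply Finset.sum_congr rfl
    intro k _
    have hg := gb_succ' α k
    push_cast
    linear_combination (-(u ^ k)) * hg
  have : HasDerivAt (ff α (M+1)) (α * (1+u) ^ (α-1) - α * PP (α-1) M u) u := h1.sub h2
  convert this using 1
  simp only [ff]
  ring

lemma tendsto_ff (M : ℕ) : ∀ α : ℝ, Tendsto (fun u => ff α M u / u^M) (𝓝[>] (0:ℝ)) (𝓝 (gb α M)) := by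
  induction M with
  | zero =>
    intro α
    simp only [pow_zero, div_one, ff, PP, Finset.range_zero, Finset.sum_empty, sub_zero, gb_zero]
    have : Tendsto (fun u : ℝ => (1+u) ^ α) (𝓝 (0:ℝ)) (𝓝 1) := by
      have : ContinuousAt (fun u : ℝ => (1+u) ^ α) 0 := by
        apply ContinuousAt.rpow_const
        · fun_prop
        · left; norm_num
      simpa using this.tendsto
    exact this.mono_left nhdsWithin_le_nhds
  | succ M ih =>
    intro α
    apply HasDerivAt.lhopital_zero_nhdsGT (f' := fun u => α * ff (α-1) M u)
      (g' := fun u => (M+1 : ℕ) * u ^ M)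
    · filter_upwards [self_mem_nhdsWithin] with u hu
      exact hasDerivAt_ff α M u hu
    · filter_upwards [self_mem_nhdsWithin] with u hu
      simpa using hasDerivAt_pow (M+1) u
    · filter_upwards [self_mem_nhdsWithin] with u hu
      have : (0:ℝ) < u := hu
      positivity
    · -- ff α (M+1) → 0
      have hc : ContinuousAt (fun u : ℝ => ff α (M+1) u) 0 := by
        apply ContinuousAt.sub
        · apply ContinuousAt.rpow_const
          · fun_prop
          · left; norm_num
        · exact (continuous_finset_sum _ (fun k _ => continuous_const.mul (continuous_pow k))).continuousAt
      have h0 : ff α (M+1) 0 = 0 := by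
        simp [ff, PP, Finset.sum_range_succ', gb_zero]
      have := hc.tendsto
      rw [h0] at this
      exact this.mono_left nhdsWithin_le_nhds
    · have : Tendsto (fun u : ℝ => u ^ (M+1)) (𝓝 0) (𝓝 ((0:ℝ)^(M+1))) := by
        exact (continuous_pow (M+1)).tendsto 0
      simpa using this.mono_left nhdsWithin_le_nhds
    · have heq : ∀ u : ℝ, α * ff (α-1) M u / ((M+1:ℕ) * u ^ M)
          = (α / (M+1)) * (ff (α-1) M u / u ^ M) := by
        intro u
        push_cast
        rw [div_mul_div_comm]
      simp only [heq]
      have := (ih (α-1)).const_mul (α / (M+1))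
      convert this using 2
      have h := gb_succ' α M
      have hM : (M:ℝ)+1 ≠ 0 := by positivity
      field_simp
      linarith [h]

lemma tendsto_ff_scaled (α t : ℝ) (ht : 0 < t) (M : ℕ) :
    Tendsto (fun ε => ff α M (ε * t) / ε^M) (𝓝[>] (0:ℝ)) (𝓝 (gb α M * t^M)) := by
  have h1 : Tendsto (fun ε : ℝ => ε * t) (𝓝[>] (0:ℝ)) (𝓝[>] (0:ℝ)) := by
    rw [tendsto_nhdsWithin_iff]
    constructor
    · have : Tendsto (fun ε : ℝ => ε * t) (𝓝 0) (𝓝 (0 * t)) :=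
        (continuous_id.mul continuous_const).tendsto 0
      simpa using this.mono_left nhdsWithin_le_nhds
    · filter_upwards [self_mem_nhdsWithin] with ε hε
      exact mul_pos hε ht
  have h2 := ((tendsto_ff M α).comp h1).const_mul (t^M)
  have heq : ∀ ε : ℝ, t^M * (ff α M (ε * t) / (ε * t)^M) = ff α M (ε * t) / ε^M := by
    intro ε
    have htM : t ^ M ≠ 0 := by positivity
    rcases eq_or_ne ε 0 with rfl | hε
    · rcases Nat.eq_zero_or_pos M with hM | hM
      · subst hM; simp
      · simp [zero_mul, zero_pow hM.ne', div_zero, mul_pow]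
    · field_simp
      ring
  have h3 : Tendsto (fun ε : ℝ => ff α M (ε * t) / ε^M) (𝓝[>] (0:ℝ)) (𝓝 (t^M * gb α M)) := by
    apply h2.congr
    intro ε
    simpa using heq ε
  convert h3 using 2
  ring

lemma dsum {n : ℕ} (z w : Fin n → ℝ) (c : ℝ) :
    ∑ i, ∑ j, c * ((z i * w i) * (z j * w j)) = c * ((∑ i, z i * w i) * (∑ i, z i * w i)) := by
  rw [Finset.sum_mul_sum, Finset.mul_sum]
  apply Finset.sum_congr rfl
  intro i _
  rw [Finset.mul_sum]

/-- FitzGerald–Horn, negative part: if `α ∈ (0, n - 2)` is not a positive integer, then some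
`n × n` positive semidefinite matrix with nonnegative entries has a non-positive-semidefinite
entrywise `α`-th power. -/
theorem stmt1 (n : ℕ) (hn : 2 ≤ n) (α : ℝ) (h0 : 0 < α) (h1 : α < (n : ℝ) - 2)
    (hnotint : ∀ k : ℕ, 0 < k → α ≠ k) :
    ∃ A : Matrix (Fin n) (Fin n) ℝ, A.PosSemidef ∧ (∀ i j, 0 ≤ A i j) ∧
      ¬ (A.map (powF α)).PosSemidef := by
  have hα_nonneg : (0:ℝ) ≤ α := h0.le
  set m : ℕ := ⌊α⌋₊ with hm
  have hmle : (m:ℝ) ≤ α := Nat.floor_le hα_nonneg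
  have hmlt : (m:ℝ) < α := by
    rcases Nat.eq_zero_or_pos m with h | h
    · rw [h]; simpa using h0
    · exact lt_of_le_of_ne hmle (Ne.symm (hnotint m h))
  have hmupper : α < (m:ℝ) + 1 := by
    have := Nat.lt_succ_floor α
    push_cast at this
    exact this
  set N : ℕ := m + 2 with hN
  have hNn : N + 1 ≤ n := by
    have h2 : (m:ℝ) + 2 < n := by linarith
    have h3 : ((m + 2 : ℕ) : ℝ) < (n:ℝ) := by push_cast; linarith
    have := Nat.cast_lt.mp h3
    omega
  -- negativity of the binomial coefficient
  have hgbneg : gb α N < 0 := by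
    have hp : 0 < ∏ j ∈ Finset.range (m+1), (α - j) := by
      apply Finset.prod_pos
      intro j hj
      have hj' : j ≤ m := Nat.lt_succ_iff.mp (Finset.mem_range.mp hj)
      have : (j:ℝ) ≤ (m:ℝ) := by exact_mod_cast hj'
      linarith
    have hprodneg : ∏ j ∈ Finset.range N, (α - j) < 0 := by
      rw [hN, Finset.prod_range_succ]
      have : α - ((m+1 : ℕ) : ℝ) < 0 := by push_cast; linarith
      exact mul_neg_of_pos_of_neg hp this
    rw [gb]
    apply div_neg_of_neg_of_pos hprodneg
    exact_mod_cast Nat.factorial_pos N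
  -- the sampling points
  set v : Fin n → ℝ := fun i => (i:ℝ) + 1 with hv
  have hvpos : ∀ i, 0 < v i := fun i => by rw [hv]; positivity
  set w : Fin (N+1) → ℝ := fun k => v (Fin.castLE hNn k) with hw
  have hwinj : Function.Injective w := by
    intro a b hab
    rw [hw, hv] at hab
    simp only [Fin.coe_castLE] at hab
    have : (a:ℕ) = (b:ℕ) := by exact_mod_cast (by linarith [hab] : ((a:ℕ):ℝ) = (b:ℕ))
    exact Fin.ext this
  -- Vandermonde system
  set V : Matrix (Fin (N+1)) (Fin (N+1)) ℝ := Matrix.of (fun k i => w i ^ (k:ℕ)) with hV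
  have hVdet : IsUnit V.det := by
    have hVt : V = (Matrix.vandermonde w)ᵀ := by
      ext k i
      simp [hV, Matrix.vandermonde]
    rw [hVt, Matrix.det_transpose]
    exact (Matrix.det_vandermonde_ne_zero_iff.mpr hwinj).isUnit
  set e : Fin (N+1) → ℝ := Pi.single (Fin.last N) 1 with he
  set z0 : Fin (N+1) → ℝ := V⁻¹ *ᵥ e with hz0
  have hVz0 : V *ᵥ z0 = e := by
    rw [hz0, Matrix.mulVec_mulVec, Matrix.mul_nonsing_inv _ hVdet, Matrix.one_mulVec]
  set z : Fin n → ℝ := fun i => if h : (i:ℕ) < N+1 then z0 ⟨i, h⟩ else 0 with hz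
  set q : ℕ → ℝ := fun k => ∑ i, z i * v i ^ k with hq
  have hqk : ∀ k : Fin (N+1), q (k:ℕ) = e k := by
    intro k
    have key : ∑ i, z i * v i ^ (k:ℕ)
        = ∑ i ∈ Finset.univ.map (Fin.castLEEmb hNn), z i * v i ^ (k:ℕ) := by
      symm
      apply Finset.sum_subset (Finset.subset_univ _)
      intro i _ hi
      have hnot : ¬ ((i:ℕ) < N+1) := by
        intro hlt
        apply hi
        rw [Finset.mem_map]
        exact ⟨⟨(i:ℕ), hlt⟩, Finset.mem_univ _, by ext; simp⟩
      rw [hz]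
      simp only [hnot, dif_neg, not_false_iff, zero_mul]
    show (∑ i, z i * v i ^ (k:ℕ)) = e k
    rw [key, Finset.sum_map, ← hVz0]
    rw [Matrix.mulVec, dotProduct]
    apply Finset.sum_congr rfl
    intro i _
    simp only [hz, hV, hw, Fin.castLEEmb_apply, Matrix.of_apply, Fin.coe_castLE, i.is_lt,
      dif_pos, Fin.eta]
    ring
  have hqzero : ∀ k, k < N → q k = 0 := by
    intro k hk
    have hk1 : k < N + 1 := by omega
    have := hqk ⟨k, hk1⟩
    rw [he] at this
    rw [Pi.single_eq_of_ne] at this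
    · exact this
    · intro hcon
      have := Fin.mk.injEq .. ▸ hcon
      have : k = N := by
        have := congrArg Fin.val hcon
        simpa using this
      omega
  have hqN : q N = 1 := by
    have := hqk (Fin.last N)
    rw [he] at this
    simpa using this
  -- the function g
  set g : ℝ → ℝ := fun ε => ∑ i, ∑ j, z i * z j * (1 + ε * (v i * v j)) ^ α with hg
  have hgff : ∀ ε : ℝ, g ε = ∑ i, ∑ j, z i * z j * ff α N (ε * (v i * v j)) := by
    intro ε
    have step1 : ∀ i j : Fin n,
        z i * z j * (1 + ε * (v i * v j)) ^ α - z i * z j * ff α N (ε * (v i * v j))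
        = ∑ k ∈ Finset.range N, (gb α k * ε^k) * ((z i * v i ^ k) * (z j * v j ^ k)) := by
      intro i j
      have h1 : z i * z j * (1 + ε * (v i * v j)) ^ α - z i * z j * ff α N (ε * (v i * v j))
          = z i * z j * PP α N (ε * (v i * v j)) := by
        simp only [ff]; ring
      rw [h1, PP, Finset.mul_sum]
      apply Finset.sum_congr rfl
      intro k _
      rw [mul_pow, mul_pow]
      ring
    have step2 : g ε - (∑ i, ∑ j, z i * z j * ff α N (ε * (v i * v j)))
        = ∑ k ∈ Finset.range N, (gb α k * ε^k) * (q k * q k) := by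
      rw [hg, ← Finset.sum_sub_distrib]
      have : ∀ i : Fin n, (∑ j, z i * z j * (1 + ε * (v i * v j)) ^ α)
          - (∑ j, z i * z j * ff α N (ε * (v i * v j)))
          = ∑ j, ∑ k ∈ Finset.range N, (gb α k * ε^k) * ((z i * v i ^ k) * (z j * v j ^ k)) := by
        intro i
        rw [← Finset.sum_sub_distrib]
        exact Finset.sum_congr rfl (fun j _ => step1 i j)
      rw [Finset.sum_congr rfl (fun i _ => this i)]
      have swap1 : ∀ i : Fin n, (∑ j, ∑ k ∈ Finset.range N,
          (gb α k * ε^k) * ((z i * v i ^ k) * (z j * v j ^ k)))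
          = ∑ k ∈ Finset.range N, ∑ j, (gb α k * ε^k) * ((z i * v i ^ k) * (z j * v j ^ k)) :=
        fun i => Finset.sum_comm
      rw [Finset.sum_congr rfl (fun i _ => swap1 i)]
      rw [Finset.sum_comm]
      apply Finset.sum_congr rfl
      intro k _
      rw [dsum z (fun i => v i ^ k) (gb α k * ε^k)]
    have hzero : ∑ k ∈ Finset.range N, (gb α k * ε^k) * (q k * q k) = 0 := by
      apply Finset.sum_eq_zero
      intro k hk
      rw [hqzero k (Finset.mem_range.mp hk)]
      ring
    linarith [step2, hzero]
  -- the limit of g ε / ε^N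
  have hlim : Tendsto (fun ε => g ε / ε^N) (𝓝[>] (0:ℝ)) (𝓝 (gb α N)) := by
    have h1 : Tendsto (fun ε => ∑ i, ∑ j, z i * z j * (ff α N (ε * (v i * v j)) / ε^N))
        (𝓝[>] (0:ℝ)) (𝓝 (∑ i, ∑ j, z i * z j * (gb α N * (v i * v j)^N))) := by
      apply tendsto_finset_sum
      intro i _
      apply tendsto_finset_sum
      intro j _
      exact (tendsto_ff_scaled α _ (mul_pos (hvpos i) (hvpos j)) N).const_mul (z i * z j)
    have hval : ∑ i, ∑ j, z i * z j * (gb α N * (v i * v j)^N) = gb α N := by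
      have hterm : ∀ i j : Fin n, z i * z j * (gb α N * (v i * v j)^N)
          = gb α N * ((z i * v i ^ N) * (z j * v j ^ N)) := by
        intro i j
        rw [mul_pow]
        ring
      calc ∑ i, ∑ j, z i * z j * (gb α N * (v i * v j)^N)
          = ∑ i, ∑ j, gb α N * ((z i * v i ^ N) * (z j * v j ^ N)) := by
            exact Finset.sum_congr rfl (fun i _ => Finset.sum_congr rfl (fun j _ => hterm i j))
        _ = gb α N * ((∑ i, z i * v i ^ N) * (∑ i, z i * v i ^ N)) := dsum z (fun i => v i ^ N) _
        _ = gb α N * (q N * q N) := rfl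
        _ = gb α N := by rw [hqN]; ring
    have hfun : ∀ ε : ℝ, ∑ i, ∑ j, z i * z j * (ff α N (ε * (v i * v j)) / ε^N) = g ε / ε^N := by
      intro ε
      rw [hgff ε, Finset.sum_div]
      apply Finset.sum_congr rfl
      intro i _
      rw [Finset.sum_div]
      apply Finset.sum_congr rfl
      intro j _
      rw [mul_div_assoc]
    rw [hval] at h1
    exact h1.congr hfun
  -- choose ε
  have hev : ∀ᶠ ε in 𝓝[>] (0:ℝ), g ε / ε^N < 0 := hlim.eventually (gt_mem_nhds hgbneg)
  obtain ⟨ε, hεneg, hεpos'⟩ := (hev.and self_mem_nhdsWithin).exists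
  have hεpos : (0:ℝ) < ε := hεpos'
  have hgneg : g ε < 0 := by
    by_contra hcon
    push_neg at hcon
    have : 0 ≤ g ε / ε^N := div_nonneg hcon (by positivity)
    linarith
  have hentry : ∀ i j : Fin n, 0 < 1 + ε * (v i * v j) := by
    intro i j
    have := mul_pos (hvpos i) (hvpos j)
    nlinarith
  refine ⟨Matrix.of (fun i j => 1 + ε * (v i * v j)), Matrix.PosSemidef.of_dotProduct_mulVec_nonneg ?_ ?_, ?_, ?_⟩
  · -- Hermitian
    show (Matrix.of (fun i j : Fin n => 1 + ε * (v i * v j)))ᴴ = _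
    ext i j
    simp only [Matrix.conjTranspose_apply, Matrix.of_apply, star_trivial]
    ring
  · -- quadratic form nonneg
    intro y
    have hsy : star y = y := funext (fun i => star_trivial _)
    rw [hsy]
    have hcalc : dotProduct y ((Matrix.of (fun i j : Fin n => 1 + ε * (v i * v j))) *ᵥ y)
        = (∑ i, y i) * (∑ i, y i) + ε * ((∑ i, y i * v i) * (∑ i, y i * v i)) := by
      rw [dotProduct]
      have h1 : ∀ i : Fin n, y i * ((Matrix.of (fun i j : Fin n => 1 + ε * (v i * v j))) *ᵥ y) i
          = ∑ j, (y i * y j + ε * ((y i * v i) * (y j * v j))) := by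
        intro i
        rw [Matrix.mulVec, dotProduct, Finset.mul_sum]
        apply Finset.sum_congr rfl
        intro j _
        simp only [Matrix.of_apply]
        ring
      rw [Finset.sum_congr rfl (fun i _ => h1 i)]
      rw [Finset.sum_congr rfl (fun i _ => Finset.sum_add_distrib)]
      rw [Finset.sum_add_distrib]
      congr 1
      · rw [Finset.sum_mul_sum]
      · rw [← dsum y v ε]
    rw [hcalc]
    nlinarith [mul_self_nonneg (∑ i, y i), mul_self_nonneg (∑ i, y i * v i), hεpos]
  · -- entries nonneg
    intro i j
    exact (hentry i j).le
  · -- not PSD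
    intro hPSD
    have h2 := hPSD.dotProduct_mulVec_nonneg z
    have hsz : star z = z := funext (fun i => star_trivial _)
    rw [hsz] at h2
    have hcalc : dotProduct z (((Matrix.of (fun i j : Fin n => 1 + ε * (v i * v j))).map
        (powF α)) *ᵥ z) = g ε := by
      rw [hg, dotProduct]
      apply Finset.sum_congr rfl
      intro i _
      rw [Matrix.mulVec, dotProduct, Finset.mul_sum]
      apply Finset.sum_congr rfl
      intro j _
      have hm : ((Matrix.of (fun i j : Fin n => 1 + ε * (v i * v j))).map (powF α)) i j
          = (1 + ε * (v i * v j)) ^ α := by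
        rw [Matrix.map_apply, Matrix.of_apply, powF, if_neg (hentry i j).ne']
      rw [hm]
      ring
    rw [hcalc] at h2
    linarith
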